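/- Let Ψ: ℝ^d → ℝ^d be given by Ψ(w) = w𝒩(‖w‖), with 𝒩: ℝ₊ → ℝ₊ non-increasing, positive on (0,∞), and q ↦ q𝒩(q) non-decreasing. Let p: ℝ^d → ℝ₊ be a symmetric probability density (p(u) = p(-u)) with finite first moment, and define φ(x) = ∫ Ψ(x+u) p(u) du. Then for any x ≠ 0 and any κ ∈ (0,1): ⟨φ(x), x⟩ ≥ 2(1-κ)‖x‖² ∫_{J(x)} 𝒩(‖x‖+‖u‖) p(u) du, where J(x) = {u ∈ ℝ^d : 0 ≤ ⟨u,x⟩ ≤ κ‖u‖‖x‖}. -/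

import Mathlib

set_option maxHeartbeats 1000000
open MeasureTheory
open scoped RealInnerProductSpace
private theorem keyK (r s t κ a b : ℝ) (hr : 0 < r) (hs : 0 ≤ s) (hκ0 : 0 < κ) (hκ1 : κ < 1)
    (ha : 0 ≤ a) (hb : 0 ≤ b) (ha2 : a^2 = r^2+s^2+2*t) (hb2 : b^2 = r^2+s^2-2*t)
    (ht1 : r^2 ≤ t) (ht2 : t ≤ κ*r*s) :
    a*(t - r^2) ≤ b*(t + (2*κ-1)*r^2) := by
  have ht0 : 0 ≤ t := le_trans (by positivity) ht1
  have hrκ : 0 ≤ 2*κ*r^2 := by positivity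
  have hc : 0 ≤ t^2 + 2*κ*r^2*t + κ*(1+2*κ)*r^4 := by
    nlinarith [sq_nonneg t, mul_nonneg hrκ ht0]
  have hg : 0 ≤ (t-r^2)*(t^2 + 2*κ*r^2*t + κ*(1+2*κ)*r^4) + κ*(1+κ)*r^6 :=
    add_nonneg (mul_nonneg (by linarith) hc) (by positivity)
  have h1 : 0 ≤ κ^2*r^2*s^2 - t^2 := by nlinarith [mul_nonneg (mul_nonneg hκ0.le hr.le) hs]
  have h2 : 0 ≤ t - (1-κ)*r^2 := by nlinarith
  have hid : κ/4 * ((b*(t + (2*κ-1)*r^2))^2 - (a*(t - r^2))^2)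
      = (κ^2*r^2*s^2 - t^2)*(t-(1-κ)*r^2)
        + (1-κ)*((t-r^2)*(t^2 + 2*κ*r^2*t + κ*(1+2*κ)*r^4) + κ*(1+κ)*r^6) := by
    linear_combination (κ/4*(t+(2*κ-1)*r^2)^2) * hb2 - (κ/4*(t-r^2)^2) * ha2
  have hD : 0 ≤ (b*(t + (2*κ-1)*r^2))^2 - (a*(t - r^2))^2 := by
    nlinarith [mul_nonneg h1 h2, mul_nonneg (by linarith : (0:ℝ) ≤ 1-κ) hg]
  have hP : 0 ≤ t + (2*κ-1)*r^2 := by nlinarith [mul_nonneg hκ0.le (sq_nonneg r)]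
  have hX : 0 ≤ b*(t + (2*κ-1)*r^2) := mul_nonneg hb hP
  nlinarith [hD, hX, mul_nonneg ha (by linarith : (0:ℝ) ≤ t - r^2)]

-- nonnegativity with t ≥ 0 (general position)
private theorem pointA (N : ℝ → ℝ)
    (hN_nonneg : ∀ q : ℝ, 0 ≤ q → 0 ≤ N q)
    (hN_mono : MonotoneOn (fun q => q * N q) (Set.Ici (0:ℝ)))
    (r s t a b : ℝ) (hr : 0 ≤ r) (hs : 0 ≤ s)
    (ha : 0 ≤ a) (hb : 0 ≤ b) (ha2 : a^2 = r^2+s^2+2*t) (hb2 : b^2 = r^2+s^2-2*t)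
    (ht0 : 0 ≤ t) (hts : t ≤ r*s) :
    0 ≤ N a * (r^2+t) + N b * (r^2-t) := by
  have hNa := hN_nonneg a ha
  have hNb := hN_nonneg b hb
  rcases le_or_gt t (r^2) with hcase | hcase
  · have h1 : 0 ≤ N a * (r^2+t) := mul_nonneg hNa (by linarith)
    have h2 : 0 ≤ N b * (r^2-t) := mul_nonneg hNb (by linarith)
    linarith
  · -- t > r^2
    have hb0 : 0 < b := by
      rcases eq_or_lt_of_le hb with h | h
      · exfalso
        have : b^2 = 0 := by rw [← h]; ring
        nlinarith [sq_nonneg (r-s)]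
      · exact h
    have hba : b ≤ a := by nlinarith
    have hqN : b * N b ≤ a * N a := hN_mono hb ha hba
    -- key: a*(t-r^2) ≤ b*(t+r^2)
    have hkey : a*(t-r^2) ≤ b*(t+r^2) := by
      have hD : 0 ≤ (b*(t+r^2))^2 - (a*(t-r^2))^2 := by
        have hid : (b*(t+r^2))^2 - (a*(t-r^2))^2 = 4*t*(r^2*s^2 - t^2) := by
          linear_combination ((t+r^2)^2) * hb2 - ((t-r^2)^2) * ha2
        rw [hid]
        have : t^2 ≤ r^2*s^2 := by nlinarith
        nlinarith
      have hX : 0 ≤ b*(t+r^2) := mul_nonneg hb (by nlinarith [sq_nonneg r])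
      nlinarith [mul_nonneg ha (by linarith : (0:ℝ) ≤ t - r^2)]
    -- N b * (t-r^2) ≤ N a * (t+r^2)
    have step : N b * (t - r^2) ≤ N a * (t + r^2) := by
      have h3 : b * (N b * (t - r^2)) ≤ b * (N a * (t + r^2)) := by
        calc b * (N b * (t - r^2)) = (b * N b) * (t - r^2) := by ring
          _ ≤ (a * N a) * (t - r^2) := by
              exact mul_le_mul_of_nonneg_right hqN (by linarith)
          _ = N a * (a * (t - r^2)) := by ring
          _ ≤ N a * (b * (t + r^2)) := mul_le_mul_of_nonneg_left hkey hNa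
          _ = b * (N a * (t + r^2)) := by ring
      exact le_of_mul_le_mul_left h3 hb0
    linarith

private theorem pointJ (N : ℝ → ℝ)
    (hN_nonneg : ∀ q : ℝ, 0 ≤ q → 0 ≤ N q)
    (hN_anti : AntitoneOn N (Set.Ici (0:ℝ)))
    (hN_mono : MonotoneOn (fun q => q * N q) (Set.Ici (0:ℝ)))
    (κ : ℝ) (hκ0 : 0 < κ) (hκ1 : κ < 1)
    (r s t a b : ℝ) (hr : 0 < r) (hs : 0 ≤ s)
    (ha : 0 ≤ a) (hb : 0 ≤ b) (ha2 : a^2 = r^2+s^2+2*t) (hb2 : b^2 = r^2+s^2-2*t)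
    (ht0 : 0 ≤ t) (htκ : t ≤ κ*r*s) :
    2*(1-κ)*r^2 * N (r+s) ≤ N a * (r^2+t) + N b * (r^2-t) := by
  have hNa0 := hN_nonneg a ha
  have hNb0 := hN_nonneg b hb
  have hNrs0 := hN_nonneg (r+s) (by linarith)
  have hts : t ≤ r*s := le_trans htκ (by nlinarith)
  have hale : a ≤ r+s := by nlinarith
  have hble : b ≤ r+s := by nlinarith
  have hNa : N (r+s) ≤ N a := hN_anti ha (by positivity : (0:ℝ) ≤ r+s) hale
  have hNb : N (r+s) ≤ N b := hN_anti hb (by positivity : (0:ℝ) ≤ r+s) hble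
  rcases le_or_gt t (r^2) with hcase | hcase
  · have h1 : N (r+s) * (r^2+t) ≤ N a * (r^2+t) :=
      mul_le_mul_of_nonneg_right hNa (by linarith)
    have h2 : N (r+s) * (r^2-t) ≤ N b * (r^2-t) :=
      mul_le_mul_of_nonneg_right hNb (by linarith)
    nlinarith [mul_nonneg (mul_nonneg hκ0.le (sq_nonneg r)) hNrs0]
  · have hb0 : 0 < b := by
      rcases eq_or_lt_of_le hb with h | h
      · exfalso
        have : b^2 = 0 := by rw [← h]; ring
        nlinarith [sq_nonneg (r-s)]
      · exact h
    have hba : b ≤ a := by nlinarith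
    have hqN : b * N b ≤ a * N a := hN_mono hb ha hba
    have hkey : a*(t - r^2) ≤ b*(t + (2*κ-1)*r^2) :=
      keyK r s t κ a b hr hs hκ0 hκ1 ha hb ha2 hb2 hcase.le htκ
    have step : N b * (t - r^2) ≤ N a * (t + (2*κ-1)*r^2) := by
      have h3 : b * (N b * (t - r^2)) ≤ b * (N a * (t + (2*κ-1)*r^2)) := by
        calc b * (N b * (t - r^2)) = (b * N b) * (t - r^2) := by ring
          _ ≤ (a * N a) * (t - r^2) := mul_le_mul_of_nonneg_right hqN (by linarith)
          _ = N a * (a * (t - r^2)) := by ring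
          _ ≤ N a * (b * (t + (2*κ-1)*r^2)) := mul_le_mul_of_nonneg_left hkey hNa0
          _ = b * (N a * (t + (2*κ-1)*r^2)) := by ring
      exact le_of_mul_le_mul_left h3 hb0
    have h2κ : (0:ℝ) ≤ 2*(1-κ)*r^2 :=
      mul_nonneg (by linarith) (sq_nonneg r)
    have hfin : 2*(1-κ)*r^2 * N a ≤ N a * (r^2+t) + N b * (r^2-t) := by nlinarith
    calc 2*(1-κ)*r^2 * N (r+s) ≤ 2*(1-κ)*r^2 * N a := mul_le_mul_of_nonneg_left hNa h2κ
      _ ≤ N a * (r^2+t) + N b * (r^2-t) := hfin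

/-- For the joint nonlinearity `Ψ(w) = 𝒩(‖w‖) w` (bounded), and a symmetric probability density
`p` with finite first moment, the smoothed map `φ(x) = ∫ Ψ(x+u) p(u) du` satisfies
`⟨φ(x), x⟩ ≥ 2(1-κ)‖x‖² ∫_{J(x)} 𝒩(‖x‖+‖u‖) p(u) du`,
where `J(x) = {u : 0 ≤ ⟨u,x⟩ ≤ κ‖u‖‖x‖}`, for any `x ≠ 0` and `κ ∈ (0,1)`. -/
theorem joint_nonlinearity_inner_bound
    (d : ℕ) (N : ℝ → ℝ)
    (hN_nonneg : ∀ q : ℝ, 0 ≤ q → 0 ≤ N q)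
    (hN_pos : ∀ q : ℝ, 0 < q → 0 < N q)
    (hN_anti : AntitoneOn N (Set.Ici (0:ℝ)))
    (hN_mono : MonotoneOn (fun q => q * N q) (Set.Ici (0:ℝ)))
    (C : ℝ) (hΨbdd : ∀ w : EuclideanSpace ℝ (Fin d), ‖N ‖w‖ • w‖ ≤ C)
    (p : EuclideanSpace ℝ (Fin d) → ℝ)
    (hp_nonneg : ∀ u, 0 ≤ p u)
    (hp_meas : Measurable p)
    (hp_int : ∫ u, p u = 1)
    (hp_symm : ∀ u, p (-u) = p u)
    (hp_moment : Integrable (fun u => ‖u‖ * p u))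
    (φ : EuclideanSpace ℝ (Fin d) → EuclideanSpace ℝ (Fin d))
    (hφ : ∀ x, φ x = ∫ u, p u • (N ‖x + u‖ • (x + u)))
    (x : EuclideanSpace ℝ (Fin d)) (hx : x ≠ 0)
    (κ : ℝ) (hκ : κ ∈ Set.Ioo (0:ℝ) 1) :
    2 * (1 - κ) * ‖x‖ ^ 2 *
        ∫ u in {u : EuclideanSpace ℝ (Fin d) | 0 ≤ ⟪u, x⟫ ∧ ⟪u, x⟫ ≤ κ * ‖u‖ * ‖x‖},
          N (‖x‖ + ‖u‖) * p u
      ≤ ⟪φ x, x⟫ := by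
  obtain ⟨hκ0, hκ1⟩ := hκ
  have hr : (0:ℝ) < ‖x‖ := norm_pos_iff.mpr hx
  set J : Set (EuclideanSpace ℝ (Fin d)) :=
    {u : EuclideanSpace ℝ (Fin d) | 0 ≤ ⟪u, x⟫ ∧ ⟪u, x⟫ ≤ κ * ‖u‖ * ‖x‖} with hJdef
  set h : EuclideanSpace ℝ (Fin d) → ℝ :=
    fun u => p u * (N ‖x + u‖ * ⟪x + u, x⟫) with hhdef
  set h2 : EuclideanSpace ℝ (Fin d) → ℝ :=
    fun u => p u * (N ‖x - u‖ * ⟪x - u, x⟫) with hh2def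
  set F : EuclideanSpace ℝ (Fin d) → ℝ := fun u => h u + h2 u with hFdef
  have hC0 : 0 ≤ C := le_trans (norm_nonneg _) (hΨbdd 0)
  -- integrability of p
  have hpI : Integrable p := by
    by_contra hcon
    rw [integral_undef hcon] at hp_int
    norm_num at hp_int
  -- measurability of N after norms
  have hNmax : ∀ c : ℝ, 0 ≤ c → Antitone (fun q : ℝ => N (c + max q 0)) := by
    intro c hc q1 q2 hq
    exact hN_anti (by simp [le_add_of_nonneg_of_le hc (le_max_right _ _)])
      (by simp [le_add_of_nonneg_of_le hc (le_max_right _ _)])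
      (by gcongr)
  have hmeasN : ∀ f : EuclideanSpace ℝ (Fin d) → EuclideanSpace ℝ (Fin d), Measurable f →
      Measurable (fun u => N ‖f u‖) := by
    intro f hf
    have heq : (fun u => N ‖f u‖)
        = (fun q : ℝ => N ((0:ℝ) + max q 0)) ∘ (fun u => ‖f u‖) := by
      funext u
      simp [max_eq_left (norm_nonneg (f u))]
    rw [heq]
    exact ((hNmax 0 le_rfl).measurable).comp hf.norm
  have hmeas_h : Measurable h := by
    rw [hhdef]
    exact hp_meas.mul ((hmeasN _ (measurable_const.add measurable_id)).mul
      ((continuous_const.add continuous_id).inner continuous_const).measurable)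
  have hmeas_h2 : Measurable h2 := by
    rw [hh2def]
    exact hp_meas.mul ((hmeasN _ (measurable_const.sub measurable_id)).mul
      ((continuous_const.sub continuous_id).inner continuous_const).measurable)
  -- the inner-product bound
  have hbound : ∀ w : EuclideanSpace ℝ (Fin d), |N ‖w‖ * ⟪w, x⟫| ≤ C * ‖x‖ := by
    intro w
    have h1 : N ‖w‖ * ⟪w, x⟫ = ⟪N ‖w‖ • w, x⟫ := (real_inner_smul_left w x (N ‖w‖)).symm
    rw [h1]
    exact le_trans (abs_real_inner_le_norm _ _)
      (mul_le_mul_of_nonneg_right (hΨbdd w) (norm_nonneg x))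
  -- integrability of h, h2
  have hIh : Integrable h := by
    refine Integrable.mono' (hpI.const_mul (C * ‖x‖)) hmeas_h.aestronglyMeasurable ?_
    filter_upwards with u
    simp only [hhdef]
    rw [Real.norm_eq_abs, abs_mul, abs_of_nonneg (hp_nonneg u)]
    calc p u * |N ‖x + u‖ * ⟪x + u, x⟫| ≤ p u * (C * ‖x‖) :=
          mul_le_mul_of_nonneg_left (hbound (x + u)) (hp_nonneg u)
      _ = C * ‖x‖ * p u := by ring
  have hIh2 : Integrable h2 := by
    refine Integrable.mono' (hpI.const_mul (C * ‖x‖)) hmeas_h2.aestronglyMeasurable ?_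
    filter_upwards with u
    simp only [hh2def]
    rw [Real.norm_eq_abs, abs_mul, abs_of_nonneg (hp_nonneg u)]
    calc p u * |N ‖x - u‖ * ⟪x - u, x⟫| ≤ p u * (C * ‖x‖) :=
          mul_le_mul_of_nonneg_left (hbound (x - u)) (hp_nonneg u)
      _ = C * ‖x‖ * p u := by ring
  have hIF : Integrable F := hIh.add hIh2
  -- h ∘ neg = h2
  have hhneg : ∀ u : EuclideanSpace ℝ (Fin d), h (-u) = h2 u := by
    intro u
    simp only [hhdef, hh2def]
    rw [hp_symm u, show x + -u = x - u from (sub_eq_add_neg x u).symm]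
  have hh2neg : ∀ u : EuclideanSpace ℝ (Fin d), h2 (-u) = h u := by
    intro u
    rw [← hhneg (-u), neg_neg]
  have hFneg : ∀ u : EuclideanSpace ℝ (Fin d), F (-u) = F u := by
    intro u
    simp only [hFdef, hhneg u, hh2neg u]
    exact add_comm _ _
  -- φ identity : ⟪φ x, x⟫ = ∫ h
  have hvecI : Integrable (fun u : EuclideanSpace ℝ (Fin d) =>
      p u • (N ‖x + u‖ • (x + u))) := by
    refine Integrable.mono' (hpI.const_mul C)
      ((hp_meas.smul ((hmeasN _ (measurable_const.add measurable_id)).smul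
        (measurable_const.add measurable_id))).aestronglyMeasurable) ?_
    filter_upwards with u
    rw [norm_smul, Real.norm_eq_abs, abs_of_nonneg (hp_nonneg u)]
    calc p u * ‖N ‖x + u‖ • (x + u)‖ ≤ p u * C :=
          mul_le_mul_of_nonneg_left (hΨbdd (x + u)) (hp_nonneg u)
      _ = C * p u := mul_comm _ _
  have hφeq : ⟪φ x, x⟫ = ∫ u, h u := by
    rw [real_inner_comm, hφ x, ← integral_inner hvecI x]
    refine integral_congr_ae (Filter.Eventually.of_forall fun u => ?_)
    simp only [hhdef]
    rw [real_inner_smul_right, real_inner_smul_right, real_inner_comm x (x + u)]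
  -- ∫ h = ∫ h2
  have hinth2 : ∫ u, h2 u = ∫ u, h u := by
    rw [show (fun u : EuclideanSpace ℝ (Fin d) => h2 u)
      = (fun u : EuclideanSpace ℝ (Fin d) => h (-u)) by funext u; rw [hhneg u]]
    exact integral_neg_eq_self h volume
  have hintF : ∫ u, F u = 2 * ∫ u, h u := by
    simp only [hFdef]
    rw [integral_add hIh hIh2, hinth2]
    ring
  -- pointwise facts
  have hnorm_add : ∀ u : EuclideanSpace ℝ (Fin d),
      ‖x + u‖^2 = ‖x‖^2 + ‖u‖^2 + 2 * ⟪u, x⟫ := by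
    intro u
    rw [norm_add_sq_real, real_inner_comm x u]
    ring
  have hnorm_sub : ∀ u : EuclideanSpace ℝ (Fin d),
      ‖x - u‖^2 = ‖x‖^2 + ‖u‖^2 - 2 * ⟪u, x⟫ := by
    intro u
    rw [norm_sub_sq_real, real_inner_comm x u]
    ring
  have hFform : ∀ u : EuclideanSpace ℝ (Fin d),
      F u = p u * (N ‖x + u‖ * (‖x‖^2 + ⟪u, x⟫) + N ‖x - u‖ * (‖x‖^2 - ⟪u, x⟫)) := by
    intro u
    simp only [hFdef, hhdef, hh2def]
    simp only [inner_add_left, inner_sub_left, real_inner_self_eq_norm_sq]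
    ring
  have habs : ∀ u : EuclideanSpace ℝ (Fin d), |⟪u, x⟫| ≤ ‖x‖ * ‖u‖ := by
    intro u
    calc |⟪u, x⟫| ≤ ‖u‖ * ‖x‖ := abs_real_inner_le_norm u x
      _ = ‖x‖ * ‖u‖ := mul_comm _ _
  -- F nonneg
  have hFnn : ∀ u : EuclideanSpace ℝ (Fin d), 0 ≤ F u := by
    intro u
    rw [hFform u]
    apply mul_nonneg (hp_nonneg u)
    rcases le_or_gt 0 (⟪u, x⟫ : ℝ) with ht | ht
    · exact pointA N hN_nonneg hN_mono ‖x‖ ‖u‖ ⟪u, x⟫ ‖x + u‖ ‖x - u‖ hr.le (norm_nonneg u)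
        (norm_nonneg _) (norm_nonneg _) (hnorm_add u) (hnorm_sub u)
        ht (le_trans (le_abs_self _) (habs u))
    · have := pointA N hN_nonneg hN_mono ‖x‖ ‖u‖ (-⟪u, x⟫) ‖x - u‖ ‖x + u‖ hr.le (norm_nonneg u)
        (norm_nonneg _) (norm_nonneg _) (by rw [hnorm_sub u]; ring) (by rw [hnorm_add u]; ring)
        (by linarith) (le_trans (neg_le_abs _) (habs u))
      linarith
  -- J measurable
  have hJm : MeasurableSet J := by
    have h1 : IsClosed {u : EuclideanSpace ℝ (Fin d) | 0 ≤ ⟪u, x⟫} :=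
      isClosed_le continuous_const (continuous_id.inner continuous_const)
    have h2' : IsClosed {u : EuclideanSpace ℝ (Fin d) | ⟪u, x⟫ ≤ κ * ‖u‖ * ‖x‖} :=
      isClosed_le (continuous_id.inner continuous_const)
        ((continuous_const.mul continuous_norm).mul continuous_const)
    exact (h1.measurableSet).inter (h2'.measurableSet)
  -- hyperplane null
  have hplane : volume {u : EuclideanSpace ℝ (Fin d) | ⟪u, x⟫ = (0:ℝ)} = 0 := by
    have hker : {u : EuclideanSpace ℝ (Fin d) | ⟪u, x⟫ = (0:ℝ)}
        = (LinearMap.ker (innerSL ℝ x).toLinearMap : Set (EuclideanSpace ℝ (Fin d))) := by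
      ext u
      simp only [Set.mem_setOf_eq, SetLike.mem_coe, LinearMap.mem_ker,
        ContinuousLinearMap.coe_coe, innerSL_apply_apply]
      rw [real_inner_comm]
    have hne : (LinearMap.ker (innerSL ℝ x).toLinearMap : Submodule ℝ (EuclideanSpace ℝ (Fin d))) ≠ ⊤ := by
      intro htop
      have hxk : x ∈ LinearMap.ker (innerSL ℝ x).toLinearMap := htop ▸ Submodule.mem_top
      rw [LinearMap.mem_ker] at hxk
      simp only [ContinuousLinearMap.coe_coe, innerSL_apply_apply] at hxk
      exact hx (inner_self_eq_zero.mp hxk)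
    rw [hker]
    exact Measure.addHaar_submodule volume _ hne
  have hdisj : AEDisjoint volume J (-J) := by
    refine measure_mono_null ?_ hplane
    rintro u ⟨huJ, huN⟩
    have h1 : 0 ≤ ⟪u, x⟫ := huJ.1
    have h2' : 0 ≤ ⟪-u, x⟫ := (Set.mem_neg.mp huN).1
    rw [inner_neg_left] at h2'
    exact le_antisymm (by linarith) h1
  -- set integral over -J equals over J
  have hnegJ : ∫ u in -J, F u = ∫ u in J, F u := by
    rw [← integral_indicator hJm.neg, ← integral_indicator hJm]
    rw [← integral_neg_eq_self ((-J).indicator F) volume]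
    congr 1
    funext u
    by_cases hu : u ∈ J
    · rw [Set.indicator_of_mem hu, Set.indicator_of_mem (by rwa [Set.mem_neg, neg_neg]), hFneg u]
    · rw [Set.indicator_of_notMem hu, Set.indicator_of_notMem (by rwa [Set.mem_neg, neg_neg])]
  -- union split
  have hsplit : ∫ u in J ∪ -J, F u = (∫ u in J, F u) + ∫ u in -J, F u :=
    integral_union_ae hdisj hJm.neg.nullMeasurableSet hIF.integrableOn hIF.integrableOn
  have hle1 : ∫ u in J ∪ -J, F u ≤ ∫ u, F u :=
    setIntegral_le_integral hIF (Filter.Eventually.of_forall hFnn)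
  -- bound N(‖x‖+‖u‖) ≤ C/‖x‖
  have hNC : ∀ q : ℝ, 0 ≤ q → N (‖x‖ + q) ≤ C / ‖x‖ := by
    intro q hq
    have hc0 : (0:ℝ) ≤ (‖x‖ + q) / ‖x‖ := by positivity
    have hw : ‖((‖x‖ + q) / ‖x‖) • x‖ = ‖x‖ + q := by
      rw [norm_smul, Real.norm_eq_abs, abs_of_nonneg hc0]
      field_simp
    have hb := hΨbdd (((‖x‖ + q) / ‖x‖) • x)
    rw [hw, norm_smul (N (‖x‖ + q)), Real.norm_eq_abs,
      abs_of_nonneg (hN_nonneg _ (by positivity)), hw] at hb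
    rw [le_div_iff₀ hr]
    calc N (‖x‖ + q) * ‖x‖ ≤ N (‖x‖ + q) * (‖x‖ + q) :=
          mul_le_mul_of_nonneg_left (by linarith) (hN_nonneg _ (by positivity))
      _ ≤ C := hb
  -- integrability of target integrand
  have hItgt : Integrable (fun u : EuclideanSpace ℝ (Fin d) => N (‖x‖ + ‖u‖) * p u) := by
    have hm : Measurable (fun u : EuclideanSpace ℝ (Fin d) => N (‖x‖ + ‖u‖)) := by
      have heq : (fun u : EuclideanSpace ℝ (Fin d) => N (‖x‖ + ‖u‖))
          = (fun q : ℝ => N (‖x‖ + max q 0)) ∘ (fun u : EuclideanSpace ℝ (Fin d) => ‖u‖) := by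
        funext u
        simp [max_eq_left (norm_nonneg u)]
      rw [heq]
      exact ((hNmax ‖x‖ hr.le).measurable).comp measurable_norm
    refine Integrable.mono' (hpI.const_mul (C / ‖x‖)) (hm.mul hp_meas).aestronglyMeasurable ?_
    filter_upwards with u
    rw [Real.norm_eq_abs, abs_mul, abs_of_nonneg (hp_nonneg u),
      abs_of_nonneg (hN_nonneg _ (by positivity))]
    exact mul_le_mul_of_nonneg_right (hNC ‖u‖ (norm_nonneg u)) (hp_nonneg u)
  -- pointwise bound on J
  have hptJ : ∀ u ∈ J, 2 * (1-κ) * ‖x‖^2 * (N (‖x‖ + ‖u‖) * p u) ≤ F u := by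
    intro u hu
    obtain ⟨ht0, htκ⟩ := hu
    have key := pointJ N hN_nonneg hN_anti hN_mono κ hκ0 hκ1 ‖x‖ ‖u‖ ⟪u, x⟫ ‖x + u‖ ‖x - u‖
      hr (norm_nonneg u) (norm_nonneg _) (norm_nonneg _)
      (hnorm_add u) (hnorm_sub u) ht0
      (by calc ⟪u, x⟫ ≤ κ * ‖u‖ * ‖x‖ := htκ
            _ = κ * ‖x‖ * ‖u‖ := by ring)
    rw [hFform u]
    calc 2 * (1-κ) * ‖x‖^2 * (N (‖x‖ + ‖u‖) * p u)
        = p u * (2 * (1-κ) * ‖x‖^2 * N (‖x‖ + ‖u‖)) := by ring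
      _ ≤ p u * (N ‖x + u‖ * (‖x‖^2 + ⟪u, x⟫) + N ‖x - u‖ * (‖x‖^2 - ⟪u, x⟫)) :=
          mul_le_mul_of_nonneg_left key (hp_nonneg u)
  -- assemble
  have hmono : ∫ u in J, 2 * (1-κ) * ‖x‖^2 * (N (‖x‖ + ‖u‖) * p u) ≤ ∫ u in J, F u :=
    setIntegral_mono_on ((hItgt.const_mul _).integrableOn) hIF.integrableOn hJm hptJ
  have hconst : ∫ u in J, 2 * (1-κ) * ‖x‖^2 * (N (‖x‖ + ‖u‖) * p u)
      = 2 * (1-κ) * ‖x‖^2 * ∫ u in J, N (‖x‖ + ‖u‖) * p u := integral_const_mul _ _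
  rw [hφeq]
  have hJF : ∫ u in J, F u ≤ ∫ u, h u := by
    have h2int : 2 * ∫ u in J, F u ≤ 2 * ∫ u, h u := by
      rw [← hintF]
      calc 2 * ∫ u in J, F u = (∫ u in J, F u) + ∫ u in -J, F u := by rw [hnegJ]; ring
        _ = ∫ u in J ∪ -J, F u := hsplit.symm
        _ ≤ ∫ u, F u := hle1
    linarith
  calc 2 * (1 - κ) * ‖x‖ ^ 2 * ∫ u in J, N (‖x‖ + ‖u‖) * p u
      = ∫ u in J, 2 * (1-κ) * ‖x‖^2 * (N (‖x‖ + ‖u‖) * p u) := hconst.symm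
    _ ≤ ∫ u in J, F u := hmono
    _ ≤ ∫ u, h u := hJF
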